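/- Let 0 < α < 1 and let f ∈ L¹(ℝ) (e.g. a test function). Let {a_j} be ρ-lacunary with ρ ≤ a_{j+1}/a_j ≤ ρ², {v_j} bounded with |v_j| ≤ V. Then for all t ∈ ℝ and integers 0 < L < M, |Σ_{j=L}^{M} v_j (P^α_{a_{j+1}} f(t) − P^α_{a_j} f(t))| ≤ C · ‖f‖_{L¹} / a_L², where C depends only on α, V, ρ; in particular this tail tends to 0 as L → ∞. -/

import Mathlib

open Real MeasureTheory Finset

/-- The one-sided fractional Poisson-type operator. -/
noncomputable def fracPoisson (α τ : ℝ) (f : ℝ → ℝ) (t : ℝ) : ℝ :=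
  (1 / (4 ^ α * Real.Gamma α)) *
    ∫ s in Set.Ioi (0:ℝ), τ ^ (2 * α) * Real.exp (-τ ^ 2 / (4 * s)) / s ^ (1 + α) * f (t - s)

lemma auxA {α x : ℝ} (hα0 : 0 < α) (hα1 : α < 1) (hx : 0 < x) :
    x ^ (1 + α) * Real.exp (-x / 4) ≤ 48 := by
  rcases le_or_gt x 1 with h | h
  · have h1 : x ^ (1 + α) ≤ 1 := Real.rpow_le_one hx.le h (by linarith)
    have h2 : Real.exp (-x / 4) ≤ 1 := Real.exp_le_one_iff.mpr (by linarith)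
    nlinarith [Real.exp_pos (-x/4), Real.rpow_nonneg hx.le (1+α)]
  · have h1 : x ^ (1 + α) ≤ x ^ (2 : ℝ) :=
      Real.rpow_le_rpow_of_exponent_le h.le (by linarith)
    have h2 : x ^ (2 : ℝ) = x ^ 2 := by
      rw [← Real.rpow_natCast x 2]; norm_num
    have h3 : x ^ 2 / 48 ≤ Real.exp (x / 4) := by
      have := Real.add_one_le_exp (x / 12)
      have h4 : (x / 12 + 1) ^ 3 ≤ Real.exp (x / 4) := by
        calc (x / 12 + 1) ^ 3 ≤ Real.exp (x / 12) ^ 3 := by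
              apply pow_le_pow_left₀ (by positivity) (by linarith)
            _ = Real.exp (x / 4) := by rw [← Real.exp_nat_mul]; push_cast; ring_nf
      nlinarith [sq_nonneg x, sq_nonneg (x/12)]
    have he : Real.exp (-x / 4) = (Real.exp (x / 4))⁻¹ := by
      rw [← Real.exp_neg]; ring_nf
    rw [he]
    have hep := Real.exp_pos (x / 4)
    rw [h2] at h1
    calc x ^ (1 + α) * (Real.exp (x/4))⁻¹ ≤ x ^ 2 * (Real.exp (x/4))⁻¹ := by
          apply mul_le_mul_of_nonneg_right h1 (by positivity)
      _ ≤ (48 * Real.exp (x/4)) * (Real.exp (x/4))⁻¹ := by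
          apply mul_le_mul_of_nonneg_right (by linarith) (by positivity)
      _ = 48 := by field_simp

lemma kernel_le {α τ s : ℝ} (hα0 : 0 < α) (hα1 : α < 1) (hτ : 0 < τ) (hs : 0 < s) :
    τ ^ (2 * α) * Real.exp (-τ ^ 2 / (4 * s)) / s ^ (1 + α) ≤ 48 / τ ^ 2 := by
  have hx : 0 < τ ^ 2 / s := by positivity
  have hA := auxA hα0 hα1 hx
  have hdiv : (τ ^ 2 / s) ^ (1 + α) = (τ ^ 2) ^ (1 + α) / s ^ (1 + α) :=
    Real.div_rpow (by positivity) hs.le _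
  have hpow : (τ ^ 2 : ℝ) ^ (1 + α) = τ ^ (2 * α) * τ ^ 2 := by
    rw [← Real.rpow_natCast τ 2, ← Real.rpow_mul hτ.le]
    rw [show ((2:ℕ):ℝ) * (1 + α) = 2 * α + 2 by push_cast; ring,
      Real.rpow_add hτ, Real.rpow_natCast]
    norm_num
  have hexp : -(τ ^ 2 / s) / 4 = -τ ^ 2 / (4 * s) := by
    field_simp
  rw [hdiv, hpow, hexp] at hA
  have hS : (0:ℝ) < s ^ (1 + α) := Real.rpow_pos_of_pos hs _
  have hτ2 : (0:ℝ) < τ ^ 2 := by positivity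
  rw [div_le_div_iff₀ hS hτ2]
  rw [div_mul_eq_mul_div, div_le_iff₀ hS] at hA
  nlinarith [Real.exp_pos (-τ ^ 2 / (4 * s)), Real.rpow_nonneg hτ.le (2*α)]

lemma frac_bound {α τ : ℝ} (hα0 : 0 < α) (hα1 : α < 1) (hτ : 0 < τ)
    {f : ℝ → ℝ} (hf : Integrable f) (t : ℝ) :
    |fracPoisson α τ f t| ≤ (48 / (4 ^ α * Real.Gamma α)) * (∫ s, |f s|) / τ ^ 2 := by
  have hD : (0:ℝ) < 4 ^ α * Real.Gamma α :=
    mul_pos (Real.rpow_pos_of_pos four_pos α) (Real.Gamma_pos_of_pos hα0)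
  have habs : Integrable (fun s => |f (t - s)|) := (hf.comp_sub_left t).abs
  have hdom : Integrable (fun s : ℝ => 48 / τ ^ 2 * |f (t - s)|) := habs.const_mul _
  have step1 : |∫ s in Set.Ioi (0:ℝ),
      τ ^ (2 * α) * Real.exp (-τ ^ 2 / (4 * s)) / s ^ (1 + α) * f (t - s)|
      ≤ ∫ s in Set.Ioi (0:ℝ),
        |τ ^ (2 * α) * Real.exp (-τ ^ 2 / (4 * s)) / s ^ (1 + α) * f (t - s)| := by
    have := norm_integral_le_integral_norm (μ := volume.restrict (Set.Ioi (0:ℝ)))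
        (f := fun s => τ ^ (2 * α) * Real.exp (-τ ^ 2 / (4 * s)) / s ^ (1 + α) * f (t - s))
    simp only [Real.norm_eq_abs] at this
    exact this
  have step2 : ∫ s in Set.Ioi (0:ℝ),
        |τ ^ (2 * α) * Real.exp (-τ ^ 2 / (4 * s)) / s ^ (1 + α) * f (t - s)|
      ≤ ∫ s in Set.Ioi (0:ℝ), 48 / τ ^ 2 * |f (t - s)| := by
    apply integral_mono_of_nonneg
    · exact Filter.Eventually.of_forall fun s => abs_nonneg _
    · exact hdom.restrict
    · filter_upwards [ae_restrict_mem measurableSet_Ioi] with s hs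
      have hk : (0:ℝ) ≤ τ ^ (2 * α) * Real.exp (-τ ^ 2 / (4 * s)) / s ^ (1 + α) := by
        have : (0:ℝ) < s := hs
        positivity
      rw [abs_mul, abs_of_nonneg hk]
      exact mul_le_mul_of_nonneg_right (kernel_le hα0 hα1 hτ hs) (abs_nonneg _)
  have step3 : ∫ s in Set.Ioi (0:ℝ), 48 / τ ^ 2 * |f (t - s)|
      ≤ ∫ s, 48 / τ ^ 2 * |f (t - s)| :=
    setIntegral_le_integral hdom (Filter.Eventually.of_forall fun s => by positivity)
  have step4 : ∫ s, 48 / τ ^ 2 * |f (t - s)| = 48 / τ ^ 2 * ∫ s, |f s| := by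
    rw [integral_const_mul, integral_sub_left_eq_self (fun s => |f s|) volume t]
  have hI : (0:ℝ) ≤ ∫ s, |f s| := integral_nonneg fun s => abs_nonneg _
  calc |fracPoisson α τ f t|
      = |1 / (4 ^ α * Real.Gamma α)| * |∫ s in Set.Ioi (0:ℝ),
          τ ^ (2 * α) * Real.exp (-τ ^ 2 / (4 * s)) / s ^ (1 + α) * f (t - s)| := by
        rw [fracPoisson, abs_mul]
    _ ≤ 1 / (4 ^ α * Real.Gamma α) * (48 / τ ^ 2 * ∫ s, |f s|) := by
        rw [abs_of_pos (by positivity)]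
        exact mul_le_mul_of_nonneg_left
          (step1.trans (step2.trans (step3.trans_eq step4))) (by positivity)
    _ = 48 / (4 ^ α * Real.Gamma α) * (∫ s, |f s|) / τ ^ 2 := by
        field_simp

lemma geom_aux {r : ℝ} (h0 : 0 ≤ r) (h1 : r < 1) (L M : ℤ) :
    ∑ j ∈ Finset.Icc L M, r ^ (j - L).toNat ≤ 1 / (1 - r) := by
  have h1r : 0 < 1 - r := by linarith
  set n : ℕ := (M - L).toNat + 1 with hn
  have hsub : (Finset.Icc L M).image (fun j => (j - L).toNat) ⊆ Finset.range n := by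
    intro k hk
    simp only [Finset.mem_image, Finset.mem_Icc] at hk
    obtain ⟨j, ⟨hj1, hj2⟩, rfl⟩ := hk
    simp only [Finset.mem_range]
    omega
  have hinj : ∀ x ∈ Finset.Icc L M, ∀ y ∈ Finset.Icc L M,
      (x - L).toNat = (y - L).toNat → x = y := by
    intro x hx y hy h
    simp only [Finset.mem_Icc] at hx hy
    omega
  calc ∑ j ∈ Finset.Icc L M, r ^ (j - L).toNat
      = ∑ k ∈ (Finset.Icc L M).image (fun j => (j - L).toNat), r ^ k :=
        (Finset.sum_image hinj).symm
    _ ≤ ∑ k ∈ Finset.range n, r ^ k :=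
        Finset.sum_le_sum_of_subset_of_nonneg hsub (fun k _ _ => by positivity)
    _ = (1 - r ^ n) / (1 - r) := by
        rw [geom_sum_eq (by linarith : r ≠ 1)]
        rw [show r - 1 = -(1 - r) by ring, show r ^ n - 1 = -(1 - r ^ n) by ring,
          neg_div_neg_eq]
    _ ≤ 1 / (1 - r) := by
        gcongr
        have : (0:ℝ) ≤ r ^ n := by positivity
        linarith

theorem stmt_14 (α ρ V : ℝ) (hα0 : 0 < α) (hα1 : α < 1) (hρ : 1 < ρ) (hV : 0 < V) :
    ∃ C > 0, ∀ (a v : ℤ → ℝ), (∀ j, 0 < a j) →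
      (∀ j, ρ ≤ a (j + 1) / a j ∧ a (j + 1) / a j ≤ ρ ^ 2) →
      (∀ j, |v j| ≤ V) →
      ∀ f : ℝ → ℝ, Integrable f →
      ∀ t : ℝ, ∀ L M : ℤ, 0 < L → L < M →
        |∑ j ∈ Finset.Icc L M,
            v j * (fracPoisson α (a (j + 1)) f t - fracPoisson α (a j) f t)|
          ≤ C * (∫ s, |f s|) / (a L) ^ 2 := by
  have hD : (0:ℝ) < 4 ^ α * Real.Gamma α :=
    mul_pos (Real.rpow_pos_of_pos four_pos α) (Real.Gamma_pos_of_pos hα0)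
  set c0 : ℝ := 48 / (4 ^ α * Real.Gamma α) with hc0
  have hc0pos : 0 < c0 := by positivity
  set r : ℝ := 1 / ρ ^ 2 with hr
  have hρ0 : (0:ℝ) < ρ := by linarith
  have hρ2 : (1:ℝ) < ρ ^ 2 := by nlinarith
  have h0r : 0 ≤ r := by positivity
  have h1r : r < 1 := by
    rw [hr, div_lt_one (by positivity)]; exact hρ2
  have h1rpos : 0 < 1 - r := by linarith
  refine ⟨2 * V * c0 / (1 - r), by positivity, ?_⟩
  intro a v ha hlac hv f hf t L M hL hLM
  have hI : (0:ℝ) ≤ ∫ s, |f s| := integral_nonneg fun s => abs_nonneg _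
  set I : ℝ := ∫ s, |f s| with hIdef
  -- growth of a
  have hstep : ∀ j, ρ * a j ≤ a (j + 1) := fun j =>
    (le_div_iff₀ (ha j)).mp (hlac j).1
  have hgrow : ∀ j, L ≤ j → a L * ρ ^ (j - L).toNat ≤ a j := by
    have H : ∀ n : ℕ, a L * ρ ^ n ≤ a (L + n) := by
      intro n
      induction n with
      | zero => simp
      | succ n ih =>
        have h1 := hstep (L + n)
        have h2 : (L + (n + 1 : ℕ) : ℤ) = (L + n) + 1 := by push_cast; ring
        rw [h2, pow_succ, ← mul_assoc]
        calc a L * ρ ^ n * ρ ≤ a (L + n) * ρ :=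
              mul_le_mul_of_nonneg_right ih (by positivity)
          _ = ρ * a (L + n) := mul_comm _ _
          _ ≤ a (L + n + 1) := h1
    intro j hj
    have := H (j - L).toNat
    rwa [show L + ((j - L).toNat : ℤ) = j by omega] at this
  -- termwise bound
  set K : ℝ := 2 * V * c0 * I / (a L) ^ 2 with hK
  have hKpos : 0 ≤ K := by positivity
  have hterm : ∀ j ∈ Finset.Icc L M,
      |v j * (fracPoisson α (a (j + 1)) f t - fracPoisson α (a j) f t)|
        ≤ K * r ^ (j - L).toNat := by
    intro j hj
    simp only [Finset.mem_Icc] at hj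
    have hb1 := frac_bound hα0 hα1 (ha (j + 1)) hf t
    have hb2 := frac_bound hα0 hα1 (ha j) hf t
    have hle : a j ≤ a (j + 1) := by nlinarith [hstep j, ha j]
    have hsq : (a j) ^ 2 ≤ (a (j + 1)) ^ 2 := by nlinarith [ha j]
    have hb1' : |fracPoisson α (a (j + 1)) f t| ≤ c0 * I / (a j) ^ 2 := by
      refine hb1.trans ?_
      gcongr
      exact pow_pos (ha j) 2
    have hb2' : |fracPoisson α (a j) f t| ≤ c0 * I / (a j) ^ 2 := hb2
    have hgj := hgrow j hj.1
    have hρk : (0:ℝ) < ρ ^ (j - L).toNat := by positivity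
    have hsqL : (a L) ^ 2 * (ρ ^ (j - L).toNat) ^ 2 ≤ (a j) ^ 2 := by
      nlinarith [ha L, ha j, mul_pos (ha L) hρk]
    have hfrac : c0 * I / (a j) ^ 2 ≤ c0 * I * r ^ (j - L).toNat / (a L) ^ 2 := by
      have hrw : c0 * I * r ^ (j - L).toNat / (a L) ^ 2
          = c0 * I / ((a L) ^ 2 * (ρ ^ (j - L).toNat) ^ 2) := by
        have hrk : r ^ (j - L).toNat = 1 / (ρ ^ (j - L).toNat) ^ 2 := by
          rw [hr, div_pow, one_pow, ← pow_mul, ← pow_mul, Nat.mul_comm]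
        rw [hrk]
        ring
      rw [hrw]
      gcongr
      exact mul_pos (pow_pos (ha L) 2) (pow_pos hρk 2)
    calc |v j * (fracPoisson α (a (j + 1)) f t - fracPoisson α (a j) f t)|
        = |v j| * |fracPoisson α (a (j + 1)) f t - fracPoisson α (a j) f t| := abs_mul _ _
      _ ≤ V * (|fracPoisson α (a (j + 1)) f t| + |fracPoisson α (a j) f t|) := by
          apply mul_le_mul (hv j) (abs_sub _ _) (abs_nonneg _) hV.le
      _ ≤ V * (c0 * I / (a j) ^ 2 + c0 * I / (a j) ^ 2) := by
          apply mul_le_mul_of_nonneg_left (add_le_add hb1' hb2') hV.le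
      _ = 2 * V * (c0 * I / (a j) ^ 2) := by ring
      _ ≤ 2 * V * (c0 * I * r ^ (j - L).toNat / (a L) ^ 2) := by
          apply mul_le_mul_of_nonneg_left hfrac (by positivity)
      _ = K * r ^ (j - L).toNat := by rw [hK]; ring
  calc |∑ j ∈ Finset.Icc L M,
        v j * (fracPoisson α (a (j + 1)) f t - fracPoisson α (a j) f t)|
      ≤ ∑ j ∈ Finset.Icc L M,
        |v j * (fracPoisson α (a (j + 1)) f t - fracPoisson α (a j) f t)| :=
        Finset.abs_sum_le_sum_abs _ _
    _ ≤ ∑ j ∈ Finset.Icc L M, K * r ^ (j - L).toNat := Finset.sum_le_sum hterm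
    _ = K * ∑ j ∈ Finset.Icc L M, r ^ (j - L).toNat := by rw [Finset.mul_sum]
    _ ≤ K * (1 / (1 - r)) :=
        mul_le_mul_of_nonneg_left (geom_aux h0r h1r L M) hKpos
    _ = 2 * V * c0 / (1 - r) * I / (a L) ^ 2 := by
        rw [hK]; field_simp
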